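/- arXiv:1508.02625 — 3 statements merged into one kernel-verified Lean document; each statement's English description precedes it below -/
import Mathlib

section
/- Let a ≥ 2 be an integer and let Φ = (1 + √5)/2. The set B of natural numbers k for which the interval [a^k, a^(k+1)) contains exactly ⌈(log a)/(log Φ)⌉ Fibonacci numbers has natural density equal to ⟨(log a)/(log Φ)⟩, i.e., the limit as N → ∞ of card(B ∩ [0, N))/N exists and equals ⟨(log a)/(log Φ)⟩, where ⟨x⟩ denotes the fractional part of x. -/
open Filter Nat Real

/-- The golden ratio Φ = (1 + √5)/2. -/
noncomputable def Phi : ℝ := (1 + Real.sqrt 5) / 2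

lemma Phi_eq : Phi = goldenRatio := rfl

lemma sqrt5_pos : (0:ℝ) < Real.sqrt 5 := Real.sqrt_pos.2 (by norm_num)

lemma abs_goldConj_pow_le_one (m : ℕ) : |goldenConj ^ m| ≤ 1 := by
  rw [abs_pow]
  apply pow_le_one₀ (abs_nonneg _)
  exact le_of_lt (abs_lt.2 ⟨neg_one_lt_goldenConj, goldenConj_neg.trans one_pos⟩)

lemma fib_mul_sqrt5 (m : ℕ) : (Nat.fib m : ℝ) * Real.sqrt 5 = goldenRatio ^ m - goldenConj ^ m := by
  rw [Real.coe_fib_eq, div_mul_cancel₀ _ (ne_of_gt sqrt5_pos)]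

lemma fib_le_gold_pow (n : ℕ) : (Nat.fib (n+1) : ℝ) ≤ goldenRatio ^ n := by
  have h5 : (0:ℝ) < Real.sqrt 5 := sqrt5_pos
  rw [Real.coe_fib_eq, div_le_iff₀ h5]
  have habs : |goldenConj| < 1 := abs_lt.2 ⟨neg_one_lt_goldenConj, goldenConj_neg.trans one_pos⟩
  have h1 : -goldenConj ^ (n+1) ≤ |goldenConj| := by
    calc -goldenConj ^ (n+1) ≤ |goldenConj ^ (n+1)| := neg_le_abs _
    _ = |goldenConj| ^ (n+1) := abs_pow _ _
    _ ≤ |goldenConj| ^ 1 := pow_le_pow_of_le_one (abs_nonneg _) habs.le (by omega)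
    _ = |goldenConj| := pow_one _
  have h2 : |goldenConj| ≤ |goldenConj| * goldenRatio ^ n := by
    nlinarith [one_le_pow₀ one_lt_goldenRatio.le (n := n), abs_nonneg goldenConj]
  have h3 : goldenRatio ^ (n+1) = goldenRatio ^ n * goldenRatio := pow_succ _ _
  have h4 : goldenRatio + |goldenConj| = Real.sqrt 5 := by
    rw [abs_of_neg goldenConj_neg]
    have := goldenRatio_sub_goldenConj
    linarith
  nlinarith [pow_nonneg goldenRatio_pos.le n]

lemma gold_pow_le_fib (n : ℕ) : goldenRatio ^ n ≤ (Nat.fib (n+2) : ℝ) := by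
  have h5 : (0:ℝ) < Real.sqrt 5 := sqrt5_pos
  rw [Real.coe_fib_eq, le_div_iff₀ h5]
  have habs : |goldenConj| < 1 := abs_lt.2 ⟨neg_one_lt_goldenConj, goldenConj_neg.trans one_pos⟩
  have h1 : goldenConj ^ (n+2) ≤ goldenConj ^ 2 := by
    calc goldenConj ^ (n+2) ≤ |goldenConj ^ (n+2)| := le_abs_self _
    _ = |goldenConj| ^ (n+2) := abs_pow _ _
    _ ≤ |goldenConj| ^ 2 := pow_le_pow_of_le_one (abs_nonneg _) habs.le (by omega)
    _ = goldenConj ^ 2 := (sq_abs _)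
  have h2 : goldenRatio ^ (n+2) = goldenRatio ^ n * goldenRatio ^ 2 := by ring
  have h3 : goldenRatio ^ 2 - Real.sqrt 5 = goldenConj ^ 2 := by
    rw [goldenRatio_sq, goldenConj_sq]
    have := goldenRatio_sub_goldenConj
    linarith
  have h4 : goldenConj ^ 2 ≤ goldenConj ^ 2 * goldenRatio ^ n := by
    nlinarith [one_le_pow₀ one_lt_goldenRatio.le (n := n), sq_nonneg goldenConj]
  nlinarith [pow_nonneg goldenRatio_pos.le n]

lemma gold_pow_fib (n : ℕ) : goldenRatio ^ (n+1) = Nat.fib (n+1) * goldenRatio + Nat.fib n := by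
  have := goldenRatio_mul_fib_succ_add_fib n; linarith

lemma log_gold_pos : 0 < Real.log Phi := Real.log_pos (Phi_eq ▸ one_lt_goldenRatio)

lemma one_lt_theta (a : ℕ) (ha : 2 ≤ a) : 1 < Real.log a / Real.log Phi := by
  rw [lt_div_iff₀ log_gold_pos, one_mul]
  apply Real.log_lt_log goldenRatio_pos
  calc goldenRatio < 2 := goldenRatio_lt_two
  _ ≤ (a:ℝ) := by exact_mod_cast ha

lemma theta_irrational (a : ℕ) (ha : 2 ≤ a) : Irrational (Real.log a / Real.log Phi) := by
  by_contra h
  rw [Irrational] at h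
  push_neg at h
  obtain ⟨r, hr⟩ := h
  have hT1 : (1:ℝ) < r := hr ▸ one_lt_theta a ha
  have hr1 : 1 < r := by exact_mod_cast hT1
  have hnum : 1 ≤ r.num := Rat.num_pos.2 (lt_trans one_pos hr1)
  set p : ℕ := r.num.toNat with hp
  have hpnum : (p : ℤ) = r.num := Int.toNat_of_nonneg (by linarith)
  have hp1 : 1 ≤ p := by omega
  set q : ℕ := r.den with hq
  have hloga : Real.log a = (r:ℝ) * Real.log Phi := by
    rw [hr, div_mul_cancel₀ _ (ne_of_gt log_gold_pos)]
  have key : Real.log (a ^ q) = Real.log (goldenRatio ^ p) := by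
    rw [Real.log_pow, Real.log_pow, ← Phi_eq]
    push_cast
    rw [hloga]
    have : ((q:ℝ) * (r:ℝ)) = (p:ℝ) := by
      have h0 := Rat.mul_den_eq_num r
      have : ((r * r.den : ℚ) : ℝ) = ((r.num : ℚ) : ℝ) := by rw [h0]
      push_cast at this
      rw [mul_comm, this, ← hpnum]
      push_cast; ring
    rw [← this]; ring
  have hpos2 : (0:ℝ) < goldenRatio ^ p := by positivity
  have heq : ((a:ℝ)) ^ q = goldenRatio ^ p := by
    have := congrArg Real.exp key
    rwa [Real.exp_log (by positivity), Real.exp_log hpos2] at this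
  obtain ⟨m, hm⟩ : ∃ m, p = m + 1 := ⟨p - 1, by omega⟩
  rw [hm] at heq
  rw [gold_pow_fib] at heq
  have hfibpos : (0:ℝ) < (Nat.fib (m+1) : ℝ) := by
    exact_mod_cast Nat.fib_pos.2 (by omega)
  have hgold : goldenRatio = ((a:ℝ) ^ q - Nat.fib m) / Nat.fib (m+1) := by
    rw [eq_div_iff hfibpos.ne']
    linarith
  apply Rat.not_irrational (((a:ℚ) ^ q - Nat.fib m) / Nat.fib (m+1))
  have : ((((a:ℚ) ^ q - Nat.fib m) / Nat.fib (m+1) : ℚ) : ℝ) = goldenRatio := by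
    push_cast
    rw [hgold]
  rw [this]
  exact goldenRatio_irrational

lemma exists_fib_ge (m : ℕ) : ∃ n, 2 ≤ n ∧ m ≤ Nat.fib n :=
  ⟨m + 5, by omega, le_trans (by omega) (Nat.le_fib_self (by omega))⟩

def efib (m : ℕ) : ℕ := Nat.find (exists_fib_ge m)

lemma efib_two_le (m : ℕ) : 2 ≤ efib m := (Nat.find_spec (exists_fib_ge m)).1
lemma le_fib_efib (m : ℕ) : m ≤ Nat.fib (efib m) := (Nat.find_spec (exists_fib_ge m)).2

lemma efib_le {m n : ℕ} (h2 : 2 ≤ n) (h : m ≤ Nat.fib n) : efib m ≤ n :=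
  Nat.find_min' _ ⟨h2, h⟩

lemma efib_le_iff {m n : ℕ} (h2 : 2 ≤ n) : efib m ≤ n ↔ m ≤ Nat.fib n :=
  ⟨fun h => le_trans (le_fib_efib m) (Nat.fib_mono h), efib_le h2⟩

lemma lt_efib_iff {m n : ℕ} (h2 : 2 ≤ n) : n < efib m ↔ Nat.fib n < m := by
  rw [← not_le, ← not_le, efib_le_iff h2]

lemma fib_strict_on : ∀ {p q : ℕ}, 2 ≤ p → p < q → Nat.fib p < Nat.fib q := by
  intro p q hp hpq
  obtain ⟨p', rfl⟩ : ∃ p', p = p' + 2 := ⟨p - 2, by omega⟩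
  obtain ⟨q', rfl⟩ : ∃ q', q = q' + 2 := ⟨q - 2, by omega⟩
  exact Nat.fib_add_two_strictMono (by omega)

lemma ncard_fib_Ico (x y : ℕ) (hx : 1 ≤ x) :
    (Set.range Nat.fib ∩ Set.Ico x y).ncard = efib y - efib x := by
  have hset : Set.range Nat.fib ∩ Set.Ico x y = Nat.fib '' Set.Ico (efib x) (efib y) := by
    ext m
    constructor
    · rintro ⟨⟨n, rfl⟩, hxm, hmy⟩
      have hn1 : 1 ≤ Nat.fib n := le_trans hx hxm
      have hn : 1 ≤ n := by by_contra h; interval_cases n <;> simp_all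
      rcases Nat.lt_or_ge n 2 with h2 | h2
      · have : n = 1 := by omega
        subst this
        refine ⟨2, ⟨?_, ?_⟩, rfl⟩
        · exact efib_le (by omega) (by simpa using hxm)
        · rw [lt_efib_iff (by omega)]; simpa using hmy
      · exact ⟨n, ⟨efib_le h2 hxm, (lt_efib_iff h2).2 hmy⟩, rfl⟩
    · rintro ⟨n, ⟨h1, h2⟩, rfl⟩
      have hn2 : 2 ≤ n := le_trans (efib_two_le x) h1
      refine ⟨⟨n, rfl⟩, ?_, ?_⟩
      · exact le_trans (le_fib_efib x) (Nat.fib_mono h1)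
      · by_contra h
        push_neg at h
        exact absurd (efib_le hn2 h) (by omega)
  rw [hset, Set.ncard_image_of_injOn]
  · have : (Set.Ico (efib x) (efib y)) = ↑(Finset.Ico (efib x) (efib y)) := by simp
    rw [this, Set.ncard_coe_finset, Nat.card_Ico]
  · intro p hp q hq hpq
    simp only [Set.mem_Ico] at hp hq
    have hp2 : 2 ≤ p := le_trans (efib_two_le x) hp.1
    have hq2 : 2 ≤ q := le_trans (efib_two_le x) hq.1
    by_contra hne
    rcases Nat.lt_or_ge p q with h | h
    · exact absurd hpq (Nat.ne_of_lt (fib_strict_on hp2 h))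
    · exact absurd hpq.symm (Nat.ne_of_lt (fib_strict_on hq2 (by omega)))

lemma eventually_upper (a fn : ℕ) (T : ℝ) (ha2 : 2 ≤ a)
    (hrpow : (a:ℝ) = goldenRatio ^ T) (hfn : (fn:ℝ) = T - Int.fract T) :
    ∀ᶠ n in atTop, (a:ℝ) * Nat.fib n ≤ Nat.fib (n + fn + 1) := by
  set u := Int.fract T with hu
  have hu1 : u < 1 := Int.fract_lt_one T
  have hδ : (0:ℝ) < goldenRatio ^ ((1:ℝ) - u) - 1 := by
    have : (1:ℝ) < goldenRatio ^ ((1:ℝ) - u) :=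
      Real.one_lt_rpow_iff_of_pos goldenRatio_pos |>.2 (Or.inl ⟨one_lt_goldenRatio, by linarith⟩)
    linarith
  set δ : ℝ := goldenRatio ^ ((1:ℝ) - u) - 1 with hδdef
  have hev : ∀ᶠ n : ℕ in atTop, ((a:ℝ) + 1) / δ ≤ goldenRatio ^ n :=
    (tendsto_pow_atTop_atTop_of_one_lt one_lt_goldenRatio).eventually_ge_atTop _
  filter_upwards [hev] with n hn
  have hgn : (0:ℝ) < goldenRatio ^ n := by positivity
  have hδgn : (a:ℝ) + 1 ≤ δ * goldenRatio ^ n := by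
    rw [div_le_iff₀ hδ] at hn; linarith [hn]
  have hXeq : goldenRatio ^ (n + fn + 1) = (a:ℝ) * goldenRatio ^ n * (1 + δ) := by
    have h1 : goldenRatio ^ (n + fn + 1) = goldenRatio ^ (((n + fn + 1 : ℕ) : ℝ)) := by
      rw [Real.rpow_natCast]
    have h2 : ((n + fn + 1 : ℕ) : ℝ) = (T + n) + (1 - u) := by push_cast [hfn]; ring
    rw [h1, h2, Real.rpow_add goldenRatio_pos, Real.rpow_add goldenRatio_pos, Real.rpow_natCast, ← hrpow]
    simp [hδdef]
  have hc1 := abs_goldConj_pow_le_one n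
  have hc2 := abs_goldConj_pow_le_one (n + fn + 1)
  rw [abs_le] at hc1 hc2
  have key : (a:ℝ) * (goldenRatio ^ n - goldenConj ^ n)
      ≤ goldenRatio ^ (n + fn + 1) - goldenConj ^ (n + fn + 1) := by
    rw [hXeq]
    have ha1 : (1:ℝ) ≤ (a:ℝ) := by exact_mod_cast le_trans (by omega) ha2
    nlinarith [hδgn, hgn, hc1.1, hc1.2, hc2.1, hc2.2]
  have h2 : ((a:ℝ) * (Nat.fib n : ℝ)) * Real.sqrt 5 ≤ (Nat.fib (n + fn + 1) : ℝ) * Real.sqrt 5 := by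
    rw [mul_assoc, fib_mul_sqrt5, fib_mul_sqrt5]
    exact key
  exact le_of_mul_le_mul_right h2 sqrt5_pos

lemma eventually_lower (a fn : ℕ) (T : ℝ) (ha2 : 2 ≤ a)
    (hrpow : (a:ℝ) = goldenRatio ^ T) (hfn : (fn:ℝ) = T - Int.fract T)
    (hu0 : 0 < Int.fract T) :
    ∀ᶠ n in atTop, (Nat.fib (n + fn) : ℝ) < a * Nat.fib n := by
  set u := Int.fract T with hu
  have hγ : goldenRatio ^ (-u) < 1 :=
    Real.rpow_lt_one_of_one_lt_of_neg one_lt_goldenRatio (by linarith)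
  have hγ0 : (0:ℝ) < goldenRatio ^ (-u) := Real.rpow_pos_of_pos goldenRatio_pos _
  set δ : ℝ := 1 - goldenRatio ^ (-u) with hδdef
  have hδ : (0:ℝ) < δ := by simp only [hδdef]; linarith
  have hev : ∀ᶠ n : ℕ in atTop, ((a:ℝ) + 2) / δ ≤ goldenRatio ^ n :=
    (tendsto_pow_atTop_atTop_of_one_lt one_lt_goldenRatio).eventually_ge_atTop _
  filter_upwards [hev] with n hn
  have hgn : (0:ℝ) < goldenRatio ^ n := by positivity
  have hδgn : (a:ℝ) + 2 ≤ δ * goldenRatio ^ n := by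
    rw [div_le_iff₀ hδ] at hn; linarith [hn]
  have hXeq : goldenRatio ^ (n + fn) = (a:ℝ) * goldenRatio ^ n * (1 - δ) := by
    have h1 : goldenRatio ^ (n + fn) = goldenRatio ^ (((n + fn : ℕ) : ℝ)) := by
      rw [Real.rpow_natCast]
    have h2 : ((n + fn : ℕ) : ℝ) = (T + n) + (-u) := by push_cast [hfn]; ring
    rw [h1, h2, Real.rpow_add goldenRatio_pos, Real.rpow_add goldenRatio_pos, Real.rpow_natCast, ← hrpow]
    simp [hδdef]
  have hc1 := abs_goldConj_pow_le_one n
  have hc2 := abs_goldConj_pow_le_one (n + fn)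
  rw [abs_le] at hc1 hc2
  have key : goldenRatio ^ (n + fn) - goldenConj ^ (n + fn)
      < (a:ℝ) * (goldenRatio ^ n - goldenConj ^ n) := by
    rw [hXeq]
    have ha1 : (1:ℝ) ≤ (a:ℝ) := by exact_mod_cast le_trans (by omega) ha2
    nlinarith [hδgn, hgn, hc1.1, hc1.2, hc2.1, hc2.2]
  have h2 : (Nat.fib (n + fn) : ℝ) * Real.sqrt 5 < ((a:ℝ) * (Nat.fib n : ℝ)) * Real.sqrt 5 := by
    rw [mul_assoc, fib_mul_sqrt5, fib_mul_sqrt5]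
    exact key
  exact lt_of_mul_lt_mul_right h2 (le_of_lt sqrt5_pos)

lemma fib_lt_two_pow : ∀ k : ℕ, Nat.fib (k+2) < 2^(k+1) := by
  have H : ∀ k : ℕ, Nat.fib (k+2) < 2^(k+1) ∧ Nat.fib (k+3) < 2^(k+2) := by
    intro k
    induction k with
    | zero => simp [Nat.fib]
    | succ n ih =>
      refine ⟨ih.2, ?_⟩
      calc Nat.fib (n + 4) = Nat.fib (n+3) + Nat.fib (n+2) := by
            rw [show n+4 = (n+2)+2 by ring, Nat.fib_add_two]; ring_nf
        _ < 2^(n+2) + 2^(n+1) := Nat.add_lt_add ih.2 ih.1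
        _ ≤ 2^(n+3) := by ring_nf; omega
  exact fun k => (H k).1

lemma efib_pow_ge (a k : ℕ) (ha : 2 ≤ a) (hk : 1 ≤ k) : k + 2 ≤ efib (a^k) := by
  have h1 : Nat.fib (k+1) < a^k := by
    obtain ⟨j, rfl⟩ : ∃ j, k = j + 1 := ⟨k - 1, by omega⟩
    calc Nat.fib (j+2) < 2^(j+1) := fib_lt_two_pow j
      _ ≤ a^(j+1) := Nat.pow_le_pow_left ha _
  have := (lt_efib_iff (m := a^k) (n := k+1) (by omega)).2 h1
  omega

lemma efib_bounds (a N : ℕ) (T : ℝ) (hN : 1 ≤ N) (hT : 0 < T)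
    (hrpow : (a:ℝ) = goldenRatio ^ T) :
    (N:ℝ) * T < efib (a^N) ∧ (efib (a^N) : ℝ) < N * T + 3 := by
  set e := efib (a^N) with he
  have he2 : 2 ≤ e := efib_two_le _
  have hfib : (a:ℕ)^N ≤ Nat.fib e := le_fib_efib _
  have haN : ((a:ℕ)^N : ℝ) = goldenRatio ^ (T * N) := by
    rw [Real.rpow_mul goldenRatio_pos.le, Real.rpow_natCast]
    push_cast [hrpow]
    ring
  constructor
  · have h1 : ((a:ℕ)^N : ℝ) ≤ goldenRatio ^ ((e - 1 : ℕ) : ℝ) := by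
      rw [Real.rpow_natCast]
      calc ((a:ℕ)^N : ℝ) ≤ (Nat.fib e : ℝ) := by exact_mod_cast hfib
        _ = (Nat.fib ((e-1)+1) : ℝ) := by rw [show (e-1)+1 = e by omega]
        _ ≤ goldenRatio ^ (e-1) := fib_le_gold_pow _
    rw [haN] at h1
    have := (Real.rpow_le_rpow_left_iff one_lt_goldenRatio).1 h1
    have hcast : ((e - 1 : ℕ) : ℝ) = (e : ℝ) - 1 := by
      push_cast [Nat.cast_sub (by omega : 1 ≤ e)]; ring
    rw [hcast] at this
    nlinarith
  · rcases Nat.lt_or_ge e 3 with h3 | h3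
    · have h4 : (e : ℝ) ≤ 2 := by exact_mod_cast Nat.lt_succ_iff.1 h3
      have : (0:ℝ) < (N:ℝ) * T := by positivity
      linarith
    · have hlt : Nat.fib (e - 1) < a^N := by
        rw [← lt_efib_iff (by omega : 2 ≤ e - 1)]
        omega
      have h1 : goldenRatio ^ ((e - 3 : ℕ) : ℝ) < ((a:ℕ)^N : ℝ) := by
        rw [Real.rpow_natCast]
        calc goldenRatio ^ (e - 3) ≤ (Nat.fib ((e-3)+2) : ℝ) := gold_pow_le_fib _
          _ = (Nat.fib (e-1) : ℝ) := by rw [show (e-3)+2 = e-1 by omega]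
          _ < ((a:ℕ)^N : ℝ) := by exact_mod_cast hlt
      rw [haN] at h1
      have := (Real.rpow_lt_rpow_left_iff one_lt_goldenRatio).1 h1
      have hcast : ((e - 3 : ℕ) : ℝ) = (e : ℝ) - 3 := by
        push_cast [Nat.cast_sub (by omega : 3 ≤ e)]; ring
      rw [hcast] at this
      nlinarith

/-- For an integer `a ≥ 2`, the set of natural numbers `k` for which the interval
`[a^k, a^(k+1))` contains exactly `⌈log a / log Φ⌉` Fibonacci numbers has natural density
`⟨log a / log Φ⟩`, where `⟨x⟩` is the fractional part of `x`. -/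
theorem density_ceil_fib_count (a : ℕ) (ha : 2 ≤ a)
    (B : Set ℕ)
    (hB : B = {k : ℕ | ((Set.range Nat.fib ∩ Set.Ico (a ^ k) (a ^ (k + 1))).ncard : ℤ)
        = ⌈Real.log a / Real.log Phi⌉}) :
    Tendsto (fun N : ℕ => (((B ∩ Set.Ico 0 N).ncard : ℝ) / N)) atTop
      (nhds (Int.fract (Real.log a / Real.log Phi))) := by
  have ha0 : (0:ℝ) < a := by positivity
  set T : ℝ := Real.log a / Real.log Phi with hTdef
  have hT1 : 1 < T := one_lt_theta a ha
  have hirr : Irrational T := theta_irrational a ha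
  have hrpow : (a:ℝ) = goldenRatio ^ T := by
    rw [Real.rpow_def_of_pos goldenRatio_pos, ← Phi_eq, hTdef,
      mul_div_cancel₀ _ (ne_of_gt log_gold_pos), Real.exp_log ha0]
  set u : ℝ := Int.fract T with hudef
  have hu0 : 0 < u := Int.fract_pos.2 (hirr.ne_int ⌊T⌋)
  have hu1 : u < 1 := Int.fract_lt_one T
  have hfl1 : 1 ≤ ⌊T⌋ := Int.le_floor.2 (by exact_mod_cast hT1.le)
  set fn : ℕ := (⌊T⌋).toNat with hfndef
  have hfl : (fn : ℤ) = ⌊T⌋ := Int.toNat_of_nonneg (by omega)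
  have hfn1 : 1 ≤ fn := by omega
  have hfnR : (fn:ℝ) = T - u := by
    have h1 : ((fn:ℤ):ℝ) = ((⌊T⌋ :ℤ):ℝ) := congrArg (Int.cast : ℤ → ℝ) hfl
    push_cast at h1
    rw [h1, hudef, Int.self_sub_fract]
  have hceil : ⌈T⌉ = (fn:ℤ) + 1 := by
    have h1 : ⌈T⌉ ≤ ⌊T⌋ + 1 := by
      apply Int.ceil_le.2
      push_cast
      exact (Int.lt_floor_add_one T).le
    have h2 : ⌊T⌋ + 1 ≤ ⌈T⌉ := by
      rw [Int.add_one_le_iff, Int.lt_ceil]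
      exact lt_of_le_of_ne (Int.floor_le T) (Ne.symm (hirr.ne_int ⌊T⌋))
    omega
  obtain ⟨K₁, hU⟩ := eventually_atTop.1 (eventually_upper a fn T ha hrpow hfnR)
  obtain ⟨K₂, hLo⟩ := eventually_atTop.1 (eventually_lower a fn T ha hrpow hfnR hu0)
  set K₀ : ℕ := K₁ + K₂ + 2 with hK₀def
  -- the key local increment facts
  have key : ∀ k, K₀ ≤ k →
      (efib (a^k) + fn ≤ efib (a^(k+1)) ∧ efib (a^(k+1)) ≤ efib (a^k) + fn + 1) := by
    intro k hk
    set n := efib (a^k) with hn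
    have hn4 : k + 2 ≤ n := efib_pow_ge a k ha (by omega)
    have hnK1 : K₁ ≤ n := by omega
    have hnK2 : K₂ ≤ n - 1 := by omega
    have hfibn : (a:ℕ)^k ≤ Nat.fib n := le_fib_efib _
    constructor
    · -- lower bound
      have hlt : Nat.fib (n - 1) < a^k := by
        rw [← lt_efib_iff (by omega : 2 ≤ n - 1)]
        omega
      have hreal : (Nat.fib ((n-1) + fn) : ℝ) < (a:ℝ) * Nat.fib (n-1) := hLo (n-1) hnK2
      have hreal2 : (Nat.fib ((n-1) + fn) : ℝ) < ((a:ℕ)^(k+1) : ℝ) := by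
        calc (Nat.fib ((n-1) + fn) : ℝ) < (a:ℝ) * Nat.fib (n-1) := hreal
          _ < (a:ℝ) * ((a:ℕ)^k : ℝ) := by
              apply mul_lt_mul_of_pos_left _ ha0
              exact_mod_cast hlt
          _ = ((a:ℕ)^(k+1) : ℝ) := by push_cast; ring
      have hnat : Nat.fib ((n-1) + fn) < a^(k+1) := by exact_mod_cast hreal2
      have : (n-1) + fn < efib (a^(k+1)) := by
        rw [lt_efib_iff (by omega)]
        exact hnat
      omega
    · -- upper bound
      apply efib_le (by omega)
      have hreal : ((a:ℕ)^(k+1) : ℝ) ≤ (Nat.fib (n + fn + 1) : ℝ) := by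
        calc ((a:ℕ)^(k+1) : ℝ) = (a:ℝ) * ((a:ℕ)^k : ℝ) := by push_cast; ring
          _ ≤ (a:ℝ) * (Nat.fib n : ℝ) := by
              apply mul_le_mul_of_nonneg_left _ ha0.le
              exact_mod_cast hfibn
          _ ≤ (Nat.fib (n + fn + 1) : ℝ) := hU n hnK1
      exact_mod_cast hreal
  -- membership characterization
  have memB : ∀ k, K₀ ≤ k → (k ∈ B ↔ efib (a^(k+1)) = efib (a^k) + fn + 1) := by
    intro k hk
    have hkey := key k hk
    rw [hB]
    simp only [Set.mem_setOf_eq]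
    rw [ncard_fib_Ico _ _ (Nat.one_le_pow _ _ (by omega)), hceil]
    omega
  -- counting by induction
  have count : ∀ N, K₀ ≤ N → ((B ∩ Set.Ico K₀ N).ncard : ℤ)
      = (efib (a^N) : ℤ) - (efib (a^K₀) : ℤ) - ((N:ℤ) - (K₀:ℤ)) * fn := by
    intro N hN
    induction N, hN using Nat.le_induction with
    | base =>
      rw [Set.Ico_self, Set.inter_empty, Set.ncard_empty]
      push_cast; ring
    | succ N hN ih =>
      have ih := ih
      have hIco : Set.Ico (K₀:ℕ) (N+1) = insert N (Set.Ico K₀ N) := by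
        ext x; simp only [Set.mem_Ico, Set.mem_insert_iff]; omega
      have hfin : (B ∩ Set.Ico K₀ N).Finite := (Set.finite_Ico _ _).inter_of_right _
      have harith : (((N+1:ℕ):ℤ) - (K₀:ℤ)) * fn = ((N:ℤ) - (K₀:ℤ)) * fn + fn := by
        push_cast; ring
      have hkN := key N hN
      by_cases hNB : N ∈ B
      · have hmem := (memB N hN).1 hNB
        have hset : B ∩ Set.Ico K₀ (N+1) = insert N (B ∩ Set.Ico K₀ N) := by
          rw [hIco]
          ext x
          simp only [Set.mem_inter_iff, Set.mem_insert_iff, Set.mem_Ico]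
          constructor
          · rintro ⟨hxB, hx | ⟨h1, h2⟩⟩
            · exact Or.inl hx
            · exact Or.inr ⟨hxB, h1, h2⟩
          · rintro (rfl | ⟨hxB, h1, h2⟩)
            · exact ⟨hNB, Or.inl rfl⟩
            · exact ⟨hxB, Or.inr ⟨h1, h2⟩⟩
        rw [hset, Set.ncard_insert_of_notMem (by simp [Set.mem_Ico]) hfin,
          Nat.cast_add, Nat.cast_one, ih, hmem]
        push_cast
        ring
      · have hmem : efib (a^(N+1)) = efib (a^N) + fn := by
          have := (memB N hN).not.1 hNB
          omega
        have hset : B ∩ Set.Ico K₀ (N+1) = B ∩ Set.Ico K₀ N := by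
          rw [hIco]
          ext x
          simp only [Set.mem_inter_iff, Set.mem_insert_iff, Set.mem_Ico]
          constructor
          · rintro ⟨hxB, hx | ⟨h1, h2⟩⟩
            · subst hx; exact absurd hxB hNB
            · exact ⟨hxB, h1, h2⟩
          · rintro ⟨hxB, h1, h2⟩
            exact ⟨hxB, Or.inr ⟨h1, h2⟩⟩
        rw [hset, ih, hmem]
        push_cast
        ring
  -- splitting the full count
  have split : ∀ N, K₀ ≤ N → ((B ∩ Set.Ico 0 N).ncard : ℤ)
      = ((B ∩ Set.Ico 0 K₀).ncard : ℤ) + ((B ∩ Set.Ico K₀ N).ncard : ℤ) := by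
    intro N hN
    have hIco : Set.Ico (0:ℕ) N = Set.Ico 0 K₀ ∪ Set.Ico K₀ N := by
      ext x; simp only [Set.mem_Ico, Set.mem_union]; omega
    have hdisj : Disjoint (B ∩ Set.Ico 0 K₀) (B ∩ Set.Ico K₀ N) := by
      apply Set.disjoint_left.2
      rintro x ⟨_, h1⟩ ⟨_, h2⟩
      simp only [Set.mem_Ico] at h1 h2
      omega
    rw [hIco, Set.inter_union_distrib_left,
      Set.ncard_union_eq hdisj ((Set.finite_Ico _ _).inter_of_right _)
        ((Set.finite_Ico _ _).inter_of_right _)]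
    push_cast; ring
  -- the uniform bound
  set C₀ : ℤ := ((B ∩ Set.Ico 0 K₀).ncard : ℤ) - (efib (a^K₀) : ℤ) + (K₀:ℤ) * fn with hC₀
  set Cb : ℝ := |(C₀:ℝ)| + 3 with hCb
  have bound : ∀ N, K₀ + 1 ≤ N → |((B ∩ Set.Ico 0 N).ncard : ℝ) - N * u| ≤ Cb := by
    intro N hN
    have hNK : K₀ ≤ N := by omega
    have hcard : ((B ∩ Set.Ico 0 N).ncard : ℤ)
        = C₀ + (efib (a^N) : ℤ) - (N:ℤ) * fn := by
      rw [split N hNK, count N hNK, hC₀]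
      ring
    have hcardR : ((B ∩ Set.Ico 0 N).ncard : ℝ)
        = (C₀:ℝ) + (efib (a^N) : ℝ) - (N:ℝ) * fn := by
      exact_mod_cast congrArg (Int.cast : ℤ → ℝ) hcard
    have hE := efib_bounds a N T (by omega) (by linarith) hrpow
    have hTu : T = fn + u := by rw [hfnR]; ring
    rw [hcardR]
    have habs : ((B ∩ Set.Ico 0 N).ncard : ℝ) - N * u = (C₀:ℝ) + ((efib (a^N) : ℝ) - N * T) := by
      rw [hcardR, hTu]; ring
    rw [← hcardR, habs]
    have h1 : |(efib (a^N) : ℝ) - N * T| ≤ 3 := by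
      rw [abs_le]; constructor <;> nlinarith [hE.1, hE.2]
    calc |(C₀:ℝ) + ((efib (a^N) : ℝ) - N * T)| ≤ |(C₀:ℝ)| + |(efib (a^N) : ℝ) - N * T| :=
          abs_add_le _ _
      _ ≤ Cb := by rw [hCb]; linarith
  -- conclude
  rw [tendsto_iff_dist_tendsto_zero]
  apply squeeze_zero' (Eventually.of_forall fun _ => dist_nonneg) _
    (tendsto_const_div_atTop_nhds_zero_nat Cb)
  filter_upwards [eventually_ge_atTop (K₀ + 1)] with N hN
  have hN0 : (0:ℝ) < N := by
    have : 1 ≤ N := by omega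
    exact_mod_cast Nat.lt_of_lt_of_le Nat.zero_lt_one this
  rw [Real.dist_eq]
  have : ((B ∩ Set.Ico 0 N).ncard : ℝ) / N - u
      = (((B ∩ Set.Ico 0 N).ncard : ℝ) - N * u) / N := by
    field_simp
  rw [this, abs_div, abs_of_pos hN0]
  exact div_le_div_of_nonneg_right (bound N hN) hN0.le
end

section
/- For every natural number i, the interval [Φ^i, Φ^(i+1)) contains exactly one Fibonacci number, where Φ = (1 + √5)/2. -/
lemma phi_sq : Phi ^ 2 = Phi + 1 := by
  have h5 : Real.sqrt 5 ^ 2 = 5 := Real.sq_sqrt (by norm_num)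
  unfold Phi
  linear_combination h5 / 4

lemma one_lt_phi : 1 < Phi := by
  have h1 : (1:ℝ) < Real.sqrt 5 := by
    nlinarith [Real.sq_sqrt (show (5:ℝ) ≥ 0 by norm_num), Real.sqrt_nonneg 5]
  unfold Phi; linarith

lemma phi_lt_two : Phi < 2 := by
  have h3 : Real.sqrt 5 < 3 := by
    nlinarith [Real.sq_sqrt (show (5:ℝ) ≥ 0 by norm_num), Real.sqrt_nonneg 5]
  unfold Phi; linarith

lemma phi_fib_bounds : ∀ i : ℕ,
    Phi ^ i ≤ (Nat.fib (i + 2) : ℝ) ∧ ((Nat.fib (i + 2) : ℝ)) < Phi ^ (i + 1) := by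
  intro i
  induction i using Nat.twoStepInduction with
  | zero => simp [one_lt_phi]
  | one =>
      constructor
      · simpa [show Nat.fib 3 = 2 from rfl] using phi_lt_two.le
      · have := one_lt_phi
        have : Phi + 1 < Phi ^ 2 + Phi ^ 2 := by nlinarith
        simp only [Nat.fib]
        push_cast
        calc (2:ℝ) = 1 + 1 := by norm_num
        _ < Phi + 1 := by linarith [one_lt_phi]
        _ = Phi ^ 2 := phi_sq.symm
  | more n ih1 ih2 =>
      have hadd : (Nat.fib (n + 4) : ℝ) = Nat.fib (n + 3) + Nat.fib (n + 2) := by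
        rw [show n + 4 = (n + 2) + 2 by ring, Nat.fib_add_two]
        push_cast; ring
      have hpow : Phi ^ (n + 2) = Phi ^ (n + 1) + Phi ^ n := by
        have : Phi ^ (n + 2) = Phi ^ n * Phi ^ 2 := by ring
        rw [this, phi_sq]; ring
      have hpow' : Phi ^ (n + 3) = Phi ^ (n + 2) + Phi ^ (n + 1) := by
        have : Phi ^ (n + 3) = Phi ^ (n + 1) * Phi ^ 2 := by ring
        rw [this, phi_sq]; ring
      constructor
      · rw [hpow, show n + 2 + 2 = n + 4 from rfl, hadd]
        exact add_le_add ih2.1 ih1.1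
      · rw [show n + 2 + 1 = n + 3 from rfl, hpow',
          show n + 2 + 2 = n + 4 from rfl, hadd]
        exact add_lt_add ih2.2 ih1.2

/-- For every natural `i`, the interval `[Φ^i, Φ^(i+1))` contains exactly one
Fibonacci number. -/
theorem unique_fib_in_phi_interval (i : ℕ) :
    (Set.range Nat.fib ∩ {n : ℕ | Phi ^ i ≤ (n : ℝ) ∧ (n : ℝ) < Phi ^ (i + 1)}).ncard
      = 1 := by
  have hΦ1 := one_lt_phi
  have huniq : ∀ a b : ℕ, ∀ x : ℝ, Phi ^ a ≤ x → x < Phi ^ (a + 1) →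
      Phi ^ b ≤ x → x < Phi ^ (b + 1) → a = b := by
    intro a b x h1 h2 h3 h4
    by_contra hne
    rcases Nat.lt_or_ge a b with h | h
    · have : Phi ^ (a + 1) ≤ Phi ^ b := pow_le_pow_right₀ hΦ1.le h
      linarith
    · have hba : b < a := by omega
      have : Phi ^ (b + 1) ≤ Phi ^ a := pow_le_pow_right₀ hΦ1.le hba
      linarith
  have hset : (Set.range Nat.fib ∩
      {n : ℕ | Phi ^ i ≤ (n : ℝ) ∧ (n : ℝ) < Phi ^ (i + 1)}) = {Nat.fib (i + 2)} := by
    ext n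
    simp only [Set.mem_inter_iff, Set.mem_range, Set.mem_setOf_eq, Set.mem_singleton_iff]
    constructor
    · rintro ⟨⟨m, rfl⟩, h1, h2⟩
      match m with
      | 0 =>
          exfalso
          have : (0:ℝ) < Phi ^ i := pow_pos (by linarith) i
          simp at h1
          linarith
      | 1 =>
          have hb := phi_fib_bounds 0
          simp only [Nat.fib_one] at h1 h2 ⊢
          have h01 : Phi ^ 0 ≤ ((1:ℕ) : ℝ) := by norm_num
          have h02 : ((1:ℕ) : ℝ) < Phi ^ (0 + 1) := by simpa using hΦ1
          have := huniq i 0 ((1:ℕ) : ℝ) h1 h2 h01 h02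
          subst this
          simp
      | (k + 2) =>
          have hb := phi_fib_bounds k
          have := huniq i k (Nat.fib (k + 2) : ℝ) h1 h2 hb.1 hb.2
          subst this
          rfl
    · rintro rfl
      exact ⟨⟨i + 2, rfl⟩, (phi_fib_bounds i).1, (phi_fib_bounds i).2⟩
  rw [hset, Set.ncard_singleton]
end

section
/- Let a ≥ 2 be an integer and let Φ = (1 + √5)/2. Then the average count of Fibonacci numbers per interval converges: the limit as N → ∞ of (1/N) · Σ_{k=0}^{N−1} card(𝓕 ∩ [a^k, a^(k+1))) exists and equals (log a)/(log Φ). -/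
open Filter

open Nat Real

lemma gold_key (n : ℕ) : goldenRatio ^ n + goldenRatio ^ (n + 1) = goldenRatio ^ (n + 2) := by
  have h := goldenRatio_sq
  calc goldenRatio ^ n + goldenRatio ^ (n+1) = goldenRatio ^ n * (goldenRatio + 1) := by ring
    _ = goldenRatio ^ n * goldenRatio ^ 2 := by rw [goldenRatio_sq]
    _ = goldenRatio ^ (n + 2) := by ring

lemma fib_cast (n : ℕ) : (fib (n + 4) : ℝ) = fib (n + 2) + fib (n + 3) := by
  have : fib (n + 4) = fib (n + 2) + fib (n + 3) := by
    rw [show n + 4 = (n + 2) + 2 by ring, fib_add_two]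
  rw [this]; push_cast; ring

lemma fib_upper : ∀ n : ℕ, (fib (n + 2) : ℝ) ≤ goldenRatio ^ (n + 1) := by
  intro n
  induction n using Nat.twoStepInduction with
  | zero => simpa using one_lt_goldenRatio.le
  | one =>
      have : (fib 3 : ℝ) = 2 := by norm_num [fib]
      rw [this, goldenRatio_sq]; linarith [one_lt_goldenRatio]
  | more n ih1 ih2 =>
      rw [fib_cast]
      calc (fib (n+2):ℝ) + fib (n+3) ≤ goldenRatio ^ (n+1) + goldenRatio ^ (n+2) := by
            exact add_le_add ih1 ih2
        _ = goldenRatio ^ (n+3) := gold_key (n+1)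

lemma fib_lower : ∀ n : ℕ, goldenRatio ^ n ≤ (fib (n + 2) : ℝ) := by
  intro n
  induction n using Nat.twoStepInduction with
  | zero => simp
  | one =>
      have : (fib 3 : ℝ) = 2 := by norm_num [fib]
      rw [this, pow_one]; exact goldenRatio_lt_two.le
  | more n ih1 ih2 =>
      rw [fib_cast, ← gold_key n]
      exact add_le_add ih1 ih2

lemma fib_exists_ge (x : ℕ) : ∃ n, x ≤ Nat.fib n :=
  ⟨max x 5, le_trans (le_max_left _ _) (Nat.le_fib_self (le_max_right _ _))⟩

lemma count_eq (x : ℕ) (hx : 2 ≤ x) :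
    (Set.range Nat.fib ∩ Set.Ico 1 x).ncard = Nat.find (fib_exists_ge x) - 2 := by
  have hspec : x ≤ Nat.fib (Nat.find (fib_exists_ge x)) := Nat.find_spec (fib_exists_ge x)
  have hmin : ∀ k, k < Nat.find (fib_exists_ge x) → Nat.fib k < x := fun k hk =>
    Nat.lt_of_not_le (Nat.find_min (fib_exists_ge x) hk)
  have hset : Set.range Nat.fib ∩ Set.Ico 1 x
      = Nat.fib '' Set.Ico 2 (Nat.find (fib_exists_ge x)) := by
    ext m
    constructor
    · rintro ⟨⟨k, rfl⟩, h1, h2⟩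
      have hk1 : 1 ≤ k := by
        rcases Nat.eq_zero_or_pos k with rfl | h
        · simp at h1
        · exact h
      have hkval : ∃ j, 2 ≤ j ∧ Nat.fib j = Nat.fib k := by
        rcases Nat.lt_or_ge k 2 with h | h
        · have : k = 1 := by omega
          subst this
          exact ⟨2, le_refl _, by simp [Nat.fib_two, Nat.fib_one]⟩
        · exact ⟨k, h, rfl⟩
      obtain ⟨j, hj2, hjv⟩ := hkval
      refine ⟨j, ⟨hj2, ?_⟩, hjv⟩
      by_contra h
      push_neg at h
      have : x ≤ Nat.fib j := le_trans hspec (Nat.fib_mono h)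
      omega
    · rintro ⟨k, ⟨hk2, hkn⟩, rfl⟩
      refine ⟨⟨k, rfl⟩, ?_, hmin k hkn⟩
      calc 1 = Nat.fib 2 := Nat.fib_two.symm
        _ ≤ Nat.fib k := Nat.fib_mono hk2
  rw [hset, Set.ncard_image_of_injOn, ← Finset.coe_Ico, Set.ncard_coe_finset,
    Nat.card_Ico]
  intro i hi j hj hij
  rcases lt_trichotomy i j with h | h | h
  · exact absurd ((Nat.fib_lt_fib hi.1).mpr h) (by omega)
  · exact h
  · exact absurd ((Nat.fib_lt_fib hj.1).mpr h) (by omega)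

lemma telescope (a : ℕ) (ha : 2 ≤ a) (N : ℕ) :
    ∑ k ∈ Finset.range N, (Set.range Nat.fib ∩ Set.Ico (a ^ k) (a ^ (k + 1))).ncard
      = (Set.range Nat.fib ∩ Set.Ico 1 (a ^ N)).ncard := by
  induction N with
  | zero => simp
  | succ N ih =>
      rw [Finset.sum_range_succ, ih]
      have h1 : (1 : ℕ) ≤ a ^ N := Nat.one_le_pow _ _ (by omega)
      have h2 : a ^ N ≤ a ^ (N + 1) := Nat.pow_le_pow_right (by omega) (by omega)
      have hunion : Set.Ico 1 (a ^ N) ∪ Set.Ico (a ^ N) (a ^ (N + 1))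
          = Set.Ico 1 (a ^ (N + 1)) := Set.Ico_union_Ico_eq_Ico h1 h2
      have hdisj : Disjoint (Set.range Nat.fib ∩ Set.Ico 1 (a ^ N))
          (Set.range Nat.fib ∩ Set.Ico (a ^ N) (a ^ (N + 1))) := by
        rw [Set.disjoint_left]
        rintro m ⟨-, -, hm1⟩ ⟨-, hm2, -⟩
        omega
      have hf1 : (Set.range Nat.fib ∩ Set.Ico 1 (a ^ N)).Finite :=
        (Set.finite_Ico _ _).inter_of_right _
      have hf2 : (Set.range Nat.fib ∩ Set.Ico (a ^ N) (a ^ (N + 1))).Finite :=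
        (Set.finite_Ico _ _).inter_of_right _
      rw [← hunion, Set.inter_union_distrib_left, Set.ncard_union_eq hdisj hf1 hf2]

/-- For an integer `a ≥ 2`, the average number of Fibonacci numbers per interval
`[a^k, a^(k+1))` converges to `log a / log Φ`. -/
theorem average_fib_count_tendsto (a : ℕ) (ha : 2 ≤ a) :
    Tendsto
      (fun N : ℕ =>
        (∑ k ∈ Finset.range N,
          ((Set.range Nat.fib ∩ Set.Ico (a ^ k) (a ^ (k + 1))).ncard : ℝ)) / N)
      atTop (nhds (Real.log a / Real.log Phi)) := by
  have hlogphi : 0 < Real.log goldenRatio := Real.log_pos one_lt_goldenRatio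
  set c : ℝ := Real.log a / Real.log Phi with hc
  have hcg : c = Real.log a / Real.log goldenRatio := rfl
  have key : ∀ N : ℕ, 1 ≤ N →
      c * N - 1 ≤ (∑ k ∈ Finset.range N,
          ((Set.range Nat.fib ∩ Set.Ico (a ^ k) (a ^ (k + 1))).ncard : ℝ)) ∧
      (∑ k ∈ Finset.range N,
          ((Set.range Nat.fib ∩ Set.Ico (a ^ k) (a ^ (k + 1))).ncard : ℝ)) ≤ c * N + 1 := by
    intro N hN
    have htel := telescope a ha N
    have hsum : (∑ k ∈ Finset.range N,
        ((Set.range Nat.fib ∩ Set.Ico (a ^ k) (a ^ (k + 1))).ncard : ℝ))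
        = ((Set.range Nat.fib ∩ Set.Ico 1 (a ^ N)).ncard : ℝ) := by
      rw [← Nat.cast_sum]
      exact_mod_cast htel
    have hx : 2 ≤ a ^ N := le_trans ha (Nat.le_self_pow (by omega) a)
    have hcount := count_eq (a ^ N) hx
    have hspec : a ^ N ≤ Nat.fib (Nat.find (fib_exists_ge (a ^ N))) :=
      Nat.find_spec (fib_exists_ge (a ^ N))
    have hmin : ∀ k, k < Nat.find (fib_exists_ge (a ^ N)) → Nat.fib k < a ^ N := fun k hk =>
      Nat.lt_of_not_le (Nat.find_min (fib_exists_ge (a ^ N)) hk)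
    have hn3 : 3 ≤ Nat.find (fib_exists_ge (a ^ N)) := by
      by_contra h
      push_neg at h
      have h2 : Nat.fib (Nat.find (fib_exists_ge (a ^ N))) ≤ Nat.fib 2 :=
        Nat.fib_mono (by omega)
      rw [Nat.fib_two] at h2
      omega
    obtain ⟨m, hm⟩ : ∃ m, Nat.find (fib_exists_ge (a ^ N)) = m + 3 :=
      ⟨Nat.find (fib_exists_ge (a ^ N)) - 3, by omega⟩
    rw [hm] at hspec hcount
    have hm2 : Nat.fib (m + 2) < a ^ N := hmin (m + 2) (by omega)
    have h1 : (a : ℝ) ^ N ≤ goldenRatio ^ (m + 2) := by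
      calc (a : ℝ) ^ N ≤ (Nat.fib (m + 3) : ℝ) := by exact_mod_cast hspec
        _ ≤ goldenRatio ^ (m + 2) := fib_upper (m + 1)
    have h2 : goldenRatio ^ m ≤ (a : ℝ) ^ N := by
      calc goldenRatio ^ m ≤ (Nat.fib (m + 2) : ℝ) := fib_lower m
        _ ≤ (a : ℝ) ^ N := by exact_mod_cast hm2.le
    have hpow : (0 : ℝ) < (a : ℝ) ^ N := by positivity
    have hla : (N : ℝ) * Real.log a = Real.log ((a : ℝ) ^ N) := (Real.log_pow (a : ℝ) N).symm
    have hl1 : (N : ℝ) * Real.log a ≤ ((m : ℝ) + 2) * Real.log goldenRatio := by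
      rw [hla]
      calc Real.log ((a : ℝ) ^ N) ≤ Real.log (goldenRatio ^ (m + 2)) :=
            Real.log_le_log hpow h1
        _ = ((m : ℝ) + 2) * Real.log goldenRatio := by rw [Real.log_pow]; push_cast; ring
    have hl2 : (m : ℝ) * Real.log goldenRatio ≤ (N : ℝ) * Real.log a := by
      rw [hla]
      calc (m : ℝ) * Real.log goldenRatio = Real.log (goldenRatio ^ m) := by
            rw [Real.log_pow]
        _ ≤ Real.log ((a : ℝ) ^ N) := Real.log_le_log (by positivity) h2
    have hcN1 : c * N ≤ (m : ℝ) + 2 := by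
      rw [hcg, div_mul_eq_mul_div, div_le_iff₀ hlogphi]
      calc Real.log a * N = (N : ℝ) * Real.log a := by ring
        _ ≤ ((m : ℝ) + 2) * Real.log goldenRatio := hl1
    have hcN2 : (m : ℝ) ≤ c * N := by
      rw [hcg, div_mul_eq_mul_div, le_div_iff₀ hlogphi]
      calc (m : ℝ) * Real.log goldenRatio ≤ (N : ℝ) * Real.log a := hl2
        _ = Real.log a * N := by ring
    have hval : (∑ k ∈ Finset.range N,
        ((Set.range Nat.fib ∩ Set.Ico (a ^ k) (a ^ (k + 1))).ncard : ℝ)) = (m : ℝ) + 1 := by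
      rw [hsum, hcount, show m + 3 - 2 = m + 1 by omega]
      push_cast; ring
    rw [hval]
    constructor <;> linarith
  have hlo : Tendsto (fun N : ℕ => c - 1 / (N : ℝ)) atTop (nhds c) := by
    have := tendsto_one_div_atTop_nhds_zero_nat (𝕜 := ℝ)
    simpa using (tendsto_const_nhds (x := c)).sub this
  have hhi : Tendsto (fun N : ℕ => c + 1 / (N : ℝ)) atTop (nhds c) := by
    have := tendsto_one_div_atTop_nhds_zero_nat (𝕜 := ℝ)
    simpa using (tendsto_const_nhds (x := c)).add this
  refine tendsto_of_tendsto_of_tendsto_of_le_of_le' hlo hhi ?_ ?_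
  · filter_upwards [eventually_ge_atTop 1] with N hN
    have hNpos : (0 : ℝ) < N := by exact_mod_cast hN
    obtain ⟨h1, -⟩ := key N hN
    rw [le_div_iff₀ hNpos]
    calc (c - 1 / N) * N = c * N - 1 := by field_simp
      _ ≤ _ := h1
  · filter_upwards [eventually_ge_atTop 1] with N hN
    have hNpos : (0 : ℝ) < N := by exact_mod_cast hN
    obtain ⟨-, h2⟩ := key N hN
    rw [div_le_iff₀ hNpos]
    calc _ ≤ c * N + 1 := h2
      _ = (c + 1 / N) * N := by field_simp
end
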